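/- Let θ : ℝⁿ → ℝ be a continuously differentiable function that is strongly convex with modulus ρ > 0, let H : ℝⁿ → ℝᵐ have convex continuously differentiable components, let φ : ℝⁿ → ℝ be convex, and let S := {x : H(x) ≤ 0} be nonempty. Let x̄ be the unique minimizer of θ + φ over S, and suppose there exist λ̄ ∈ ℝᵐ with λ̄ ≥ 0, ⟨λ̄, H(x̄)⟩ = 0, and v̄ ∈ ∂φ(x̄) such that ∇θ(x̄) + v̄ + ∇H(x̄)λ̄ = 0. Then for any x ∈ ℝⁿ, λ ∈ ℝᵐ with λ ≥ 0, and v ∈ ∂φ(x): ρ‖x − x̄‖² ≤ ‖x − x̄‖·‖∇θ(x) + v + ∇H(x)λ‖ + ‖λ̄‖₁·‖[H(x)]₊‖_∞ − ⟨λ, H(x)⟩. -/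

import Mathlib

open RealInnerProductSpace

/-- Gradient inequality for a convex differentiable function. -/
lemma grad_convex_ineq {E : Type*} [NormedAddCommGroup E] [InnerProductSpace ℝ E]
    [CompleteSpace E]
    {f : E → ℝ} {g : E} {x : E} (hf : ConvexOn ℝ Set.univ f)
    (hg : HasGradientAt f g x) (y : E) : ⟪g, y - x⟫ ≤ f y - f x := by
  set ψ : ℝ → ℝ := fun t => f (x + t • (y - x)) with hψ
  have hψconv : ConvexOn ℝ Set.univ ψ := by
    refine ⟨convex_univ, fun p _ q _ a b ha hb hab => ?_⟩
    have key : x + (a • p + b • q) • (y - x)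
        = a • (x + p • (y - x)) + b • (x + q • (y - x)) := by
      match_scalars <;> simp only [smul_eq_mul] <;> ring_nf <;> linarith
    show f (x + (a • p + b • q) • (y - x))
        ≤ a • f (x + p • (y - x)) + b • f (x + q • (y - x))
    rw [key]
    exact hf.2 (Set.mem_univ _) (Set.mem_univ _) ha hb hab
  have h1 : HasDerivAt (fun t : ℝ => x + t • (y - x)) (y - x) 0 := by
    simpa using ((hasDerivAt_id (0 : ℝ)).smul_const (y - x)).const_add x
  have hfd : HasFDerivAt f (InnerProductSpace.toDual ℝ E g) (x + (0 : ℝ) • (y - x)) := by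
    simpa using hg.hasFDerivAt
  have hder : HasDerivAt ψ ⟪g, y - x⟫ 0 := by
    have := hfd.comp_hasDerivAt 0 h1
    exact this
  have := hψconv.le_slope_of_hasDerivAt (Set.mem_univ (0 : ℝ)) (Set.mem_univ (1 : ℝ))
    one_pos hder
  rw [slope_def_field] at this
  simpa [hψ] using this

/-- Global error bound for a strongly convex program (Proposition 2.1): under a KKT
condition at the unique minimizer `xb` of `θ + φ` over `S = {x | H x ≤ 0}`, for every
`x`, `λ ≥ 0` and subgradient `v` of `φ` at `x`,
`ρ‖x − xb‖² ≤ ‖x − xb‖·‖∇θ(x) + v + ∇H(x)λ‖ + ‖λb‖₁·‖[H x]₊‖_∞ − ⟨λ, H x⟩`. -/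
theorem stmt_2 {n m : ℕ}
    (θ φ : EuclideanSpace ℝ (Fin n) → ℝ)
    (θ' : EuclideanSpace ℝ (Fin n) → EuclideanSpace ℝ (Fin n))
    (H : Fin m → EuclideanSpace ℝ (Fin n) → ℝ)
    (H' : Fin m → EuclideanSpace ℝ (Fin n) → EuclideanSpace ℝ (Fin n))
    (ρ : ℝ) (hρ : 0 < ρ)
    (hθdiff : ∀ x, HasGradientAt θ (θ' x) x)
    (hθsc : ∀ x y, ⟪x - y, θ' x - θ' y⟫ ≥ ρ * ‖x - y‖ ^ 2)
    (hHdiff : ∀ i x, HasGradientAt (H i) (H' i x) x)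
    (hHconv : ∀ i, ConvexOn ℝ Set.univ (H i))
    (hφconv : ConvexOn ℝ Set.univ φ)
    (S : Set (EuclideanSpace ℝ (Fin n))) (hS : S = {x | ∀ i, H i x ≤ 0})
    (hSne : S.Nonempty)
    (xb : EuclideanSpace ℝ (Fin n)) (hxbS : xb ∈ S)
    (hmin : ∀ x ∈ S, θ xb + φ xb ≤ θ x + φ x)
    (huniq : ∀ z ∈ S, θ z + φ z = θ xb + φ xb → z = xb)
    (lb : Fin m → ℝ) (hlb : ∀ i, 0 ≤ lb i) (hcomp : ∑ i, lb i * H i xb = 0)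
    (vb : EuclideanSpace ℝ (Fin n)) (hvb : ∀ z, φ z ≥ φ xb + ⟪vb, z - xb⟫)
    (hKKT : θ' xb + vb + ∑ i, lb i • H' i xb = 0)
    (x : EuclideanSpace ℝ (Fin n)) (lam : Fin m → ℝ) (hlam : ∀ i, 0 ≤ lam i)
    (v : EuclideanSpace ℝ (Fin n)) (hv : ∀ z, φ z ≥ φ x + ⟪v, z - x⟫) :
    ρ * ‖x - xb‖ ^ 2 ≤
      ‖x - xb‖ * ‖θ' x + v + ∑ i, lam i • H' i x‖
        + (∑ i, |lb i|) * ‖(fun i => max (H i x) 0 : Fin m → ℝ)‖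
        - ∑ i, lam i * H i x := by
  set d := x - xb with hd
  set G := θ' x + v + ∑ i, lam i • H' i x with hG
  have hHxb : ∀ i, H i xb ≤ 0 := by
    have := hxbS; rw [hS] at this; exact this
  -- strong monotonicity
  have hsc : ρ * ‖d‖ ^ 2 ≤ ⟪d, θ' x - θ' xb⟫ := hθsc x xb
  -- express θ' xb via KKT
  have hθxb : θ' xb = -vb - ∑ i, lb i • H' i xb := by
    have h : θ' xb + (vb + ∑ i, lb i • H' i xb) = 0 := by rw [← add_assoc]; exact hKKT
    rw [sub_eq_add_neg, ← neg_add]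
    exact eq_neg_of_add_eq_zero_left h
  have hflipd : xb - x = -d := by rw [hd]; abel
  -- monotonicity of the subdifferential of φ
  have hmono : (0 : ℝ) ≤ ⟪d, v - vb⟫ := by
    have h1 := hv xb
    have h2 := hvb x
    have e1 : (⟪v, xb - x⟫ : ℝ) = -⟪d, v⟫ := by
      rw [hflipd, inner_neg_right, real_inner_comm v d]
    have e2 : (⟪vb, x - xb⟫ : ℝ) = ⟪d, vb⟫ := by
      rw [← hd, real_inner_comm vb d]
    rw [inner_sub_right]
    linarith
  -- convexity bounds from gradient inequality
  have hconvx : ∀ i, (⟪H' i x, xb - x⟫ : ℝ) ≤ H i xb - H i x := fun i =>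
    grad_convex_ineq (hHconv i) (hHdiff i x) xb
  have hconvxb : ∀ i, (⟪H' i xb, x - xb⟫ : ℝ) ≤ H i x - H i xb := fun i =>
    grad_convex_ineq (hHconv i) (hHdiff i xb) x
  -- bound term B
  have hB : -∑ i, lam i * ⟪d, H' i x⟫ ≤ -∑ i, lam i * H i x := by
    rw [neg_le_neg_iff]
    apply Finset.sum_le_sum
    intro i _
    have hflip : (⟪H' i x, xb - x⟫ : ℝ) = -⟪d, H' i x⟫ := by
      rw [hflipd, inner_neg_right, real_inner_comm (H' i x) d]
    have hkey : H i x - H i xb ≤ ⟪d, H' i x⟫ := by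
      have := hconvx i; rw [hflip] at this; linarith
    have hnn : 0 ≤ lam i * (-H i xb) := mul_nonneg (hlam i) (neg_nonneg.2 (hHxb i))
    nlinarith [mul_le_mul_of_nonneg_left hkey (hlam i)]
  -- bound term C
  have hpnorm : ∀ i, max (H i x) 0 ≤ ‖(fun i => max (H i x) 0 : Fin m → ℝ)‖ := by
    intro i
    have := norm_le_pi_norm (fun i => max (H i x) 0 : Fin m → ℝ) i
    rwa [Real.norm_eq_abs, abs_of_nonneg (le_max_right _ _)] at this
  have hC : ∑ i, lb i * ⟪d, H' i xb⟫ ≤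
      (∑ i, |lb i|) * ‖(fun i => max (H i x) 0 : Fin m → ℝ)‖ := by
    have step1 : ∑ i, lb i * ⟪d, H' i xb⟫ ≤ ∑ i, lb i * H i x := by
      have hs : ∑ i, lb i * ⟪d, H' i xb⟫ ≤ ∑ i, lb i * (H i x - H i xb) := by
        apply Finset.sum_le_sum
        intro i _
        refine mul_le_mul_of_nonneg_left ?_ (hlb i)
        rw [hd, real_inner_comm (H' i xb) (x - xb)]
        exact hconvxb i
      have hexp : ∑ i, lb i * (H i x - H i xb)
          = ∑ i, lb i * H i x - ∑ i, lb i * H i xb := by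
        rw [← Finset.sum_sub_distrib]; congr 1; ext i; ring
      rw [hexp, hcomp, sub_zero] at hs
      exact hs
    refine step1.trans ?_
    rw [Finset.sum_mul]
    apply Finset.sum_le_sum
    intro i _
    calc lb i * H i x ≤ lb i * max (H i x) 0 :=
          mul_le_mul_of_nonneg_left (le_max_left _ _) (hlb i)
      _ ≤ |lb i| * ‖(fun i => max (H i x) 0 : Fin m → ℝ)‖ :=
          mul_le_mul (le_abs_self _) (hpnorm i) (le_max_right _ _) (abs_nonneg _)
  -- Cauchy-Schwarz
  have hCS : (⟪d, G⟫ : ℝ) ≤ ‖d‖ * ‖G‖ := real_inner_le_norm d G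
  -- put everything together
  have hexpand : (⟪d, θ' x - θ' xb⟫ : ℝ)
      = ⟪d, G⟫ - ⟪d, v - vb⟫ - ∑ i, lam i * ⟪d, H' i x⟫
        + ∑ i, lb i * ⟪d, H' i xb⟫ := by
    rw [hG, hθxb]
    simp only [inner_sub_right, inner_add_right, inner_neg_right, inner_sum,
      real_inner_smul_right, sub_neg_eq_add]
    ring
  rw [hexpand] at hsc
  have hfinal : ρ * ‖d‖ ^ 2 ≤ ‖d‖ * ‖G‖
      + (∑ i, |lb i|) * ‖(fun i => max (H i x) 0 : Fin m → ℝ)‖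
      - ∑ i, lam i * H i x := by
    linarith
  rw [hd, hG] at hfinal
  exact hfinal
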